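/- If ‖·‖ is a unitarily invariant M-norm on M_n(ℂ), then ‖·‖ = α‖·‖_∞ for some α > 0. -/

import Mathlib

open Matrix BigOperators ComplexOrder

/-- Square complex matrices. -/
abbrev Mat (n : ℕ) := Matrix (Fin n) (Fin n) ℂ

/-- `N` is a norm on `Mat n`. -/
def IsMatrixNorm {n : ℕ} (N : Mat n → ℝ) : Prop :=
  (∀ A, N A = 0 ↔ A = 0) ∧
  (∀ (c : ℂ) (A : Mat n), N (c • A) = ‖c‖ * N A) ∧
  (∀ A B : Mat n, N (A + B) ≤ N A + N B)

/-- A set of matrices is C*-convex. -/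
def CStarConvex {n : ℕ} (K : Set (Mat n)) : Prop :=
  ∀ (k : ℕ) (C A : Fin k → Mat n), (∀ i, A i ∈ K) →
    (∑ i, (C i)ᴴ * C i = 1) → (∑ i, (C i)ᴴ * A i * C i) ∈ K

/-- `N` is an M-norm. -/
def IsMNorm {n : ℕ} (N : Mat n → ℝ) : Prop :=
  ∀ (k : ℕ) (C X : Fin k → Mat n), (∑ i, (C i)ᴴ * C i = 1) →
    N (∑ i, (C i)ᴴ * X i * C i) ≤ ⨆ i, N (X i)

/-- `N` is an L-norm. -/
def IsLNorm {n : ℕ} (N : Mat n → ℝ) : Prop :=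
  ∀ (k : ℕ) (C : Fin k → Mat n) (X : Mat n), (∑ i, (C i)ᴴ * C i = 1) →
    ∑ i, N (C i * X * (C i)ᴴ) ≤ N X

/-- The dual norm with respect to the pairing `⟨Y|X⟩ = Tr(Yᴴ X)`. -/
noncomputable def dualNorm {n : ℕ} (N : Mat n → ℝ) (Y : Mat n) : ℝ :=
  sSup {r | ∃ X : Mat n, N X ≤ 1 ∧ r = ‖(Yᴴ * X).trace‖}

/-- The operator (spectral) norm of a matrix. -/
noncomputable def opNorm {n : ℕ} (A : Mat n) : ℝ :=
  ‖Matrix.toEuclideanCLM (𝕜 := ℂ) (n := Fin n) A‖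

/-- The trace norm `‖A‖₁ = Tr((AᴴA)^{1/2})`. -/
noncomputable def traceNorm {n : ℕ} (A : Mat n) : ℝ :=
  (((Matrix.posSemidef_conjTranspose_mul_self A).1.eigenvectorUnitary : Mat n) *
    Matrix.diagonal (fun i => ((Real.sqrt
      ((Matrix.posSemidef_conjTranspose_mul_self A).1.eigenvalues i) : ℝ) : ℂ)) *
    (star (Matrix.posSemidef_conjTranspose_mul_self A).1.eigenvectorUnitary : Mat n)).trace.re

/-- The numerical radius. -/
noncomputable def numRadius {n : ℕ} (A : Mat n) : ℝ :=
  sSup {r | ∃ x : EuclideanSpace ℂ (Fin n), ‖x‖ = 1 ∧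
    r = ‖(inner ℂ x (Matrix.toEuclideanCLM (𝕜 := ℂ) (n := Fin n) A x))‖}

namespace MNormAux

/-! ### opNorm lemmas -/

lemma euclid_norm_sq {n : ℕ} (v : Fin n → ℂ) :
    ‖(WithLp.equiv 2 (Fin n → ℂ)).symm v‖ ^ 2 = ∑ i, ‖v i‖ ^ 2 := by
  rw [EuclideanSpace.norm_eq, Real.sq_sqrt (by positivity)]
  simp

lemma clm_apply_norm_sq {n : ℕ} (A : Mat n) (v : Fin n → ℂ) :
    ‖toEuclideanCLM (𝕜 := ℂ) (n := Fin n) A ((WithLp.equiv 2 (Fin n → ℂ)).symm v)‖ ^ 2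
      = ∑ i, ‖(A *ᵥ v) i‖ ^ 2 := by
  rw [WithLp.equiv_symm_apply, toEuclideanCLM_toLp, ← WithLp.equiv_symm_apply, euclid_norm_sq]

lemma mem_unit {n : ℕ} {U : Mat n} (h1 : Uᴴ * U = 1) (h2 : U * Uᴴ = 1) :
    toEuclideanCLM (𝕜 := ℂ) (n := Fin n) U ∈
      unitary (EuclideanSpace ℂ (Fin n) →L[ℂ] EuclideanSpace ℂ (Fin n)) := by
  constructor
  · rw [← map_star, ← _root_.map_mul, Matrix.star_eq_conjTranspose, h1, _root_.map_one]
  · rw [← map_star, ← _root_.map_mul, Matrix.star_eq_conjTranspose, h2, _root_.map_one]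

lemma opNorm_unit_mul {n : ℕ} (A : Mat n) {U V : Mat n} (h1 : Uᴴ * U = 1) (h2 : U * Uᴴ = 1)
    (h3 : Vᴴ * V = 1) (h4 : V * Vᴴ = 1) : opNorm (U * A * V) = opNorm A := by
  have hu := mem_unit h1 h2
  have hv := mem_unit h3 h4
  simp only [opNorm, _root_.map_mul]
  rw [CStarRing.norm_mul_mem_unitary _ hv, CStarRing.norm_mem_unitary_mul _ hu]

lemma opNorm_diag_lower {n : ℕ} (d : Fin n → ℂ) (j : Fin n) :
    ‖d j‖ ≤ opNorm (diagonal d) := by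
  have h := (toEuclideanCLM (𝕜 := ℂ) (n := Fin n) (diagonal d)).le_opNorm
    ((WithLp.equiv 2 (Fin n → ℂ)).symm (Pi.single j 1))
  have hsq : ‖toEuclideanCLM (𝕜 := ℂ) (n := Fin n) (diagonal d)
      ((WithLp.equiv 2 (Fin n → ℂ)).symm (Pi.single j 1))‖ ^ 2 = ‖d j‖ ^ 2 := by
    rw [clm_apply_norm_sq]
    have hv : ∀ i, (diagonal d *ᵥ Pi.single j 1) i = if i = j then d j else 0 := by
      intro i
      rw [mulVec_diagonal]
      by_cases hij : i = j
      · subst hij; simp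
      · simp [hij]
    rw [Finset.sum_congr rfl (fun i _ => by rw [hv i])]
    simp [apply_ite (‖·‖)]
  have hn : ‖toEuclideanCLM (𝕜 := ℂ) (n := Fin n) (diagonal d)
      ((WithLp.equiv 2 (Fin n → ℂ)).symm (Pi.single j 1))‖ = ‖d j‖ := by
    rw [← Real.sqrt_sq (norm_nonneg _), hsq, Real.sqrt_sq (norm_nonneg _)]
  have hx : ‖(WithLp.equiv 2 (Fin n → ℂ)).symm (Pi.single j (1:ℂ))‖ = 1 := by
    have h2 := euclid_norm_sq (Pi.single j (1:ℂ))
    have hsum : ∑ i, ‖(Pi.single j (1:ℂ) : Fin n → ℂ) i‖ ^ 2 = 1 := by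
      simp [Pi.single_apply, apply_ite (‖·‖)]
    rw [← Real.sqrt_sq (norm_nonneg _), h2, hsum, Real.sqrt_one]
  rw [hn, hx, mul_one] at h
  exact h

lemma opNorm_diag_upper {n : ℕ} (d : Fin n → ℂ) (s : ℝ) (hs : 0 ≤ s)
    (h : ∀ i, ‖d i‖ ≤ s) : opNorm (diagonal d) ≤ s := by
  refine ContinuousLinearMap.opNorm_le_bound _ hs fun x => ?_
  have hx : x = (WithLp.equiv 2 (Fin n → ℂ)).symm ((WithLp.equiv 2 (Fin n → ℂ)) x) := rfl
  rw [hx]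
  have h1 := clm_apply_norm_sq (diagonal d) ((WithLp.equiv 2 (Fin n → ℂ)) x)
  have h2 := euclid_norm_sq ((WithLp.equiv 2 (Fin n → ℂ)) x)
  rw [← hx] at h2
  have key : ∑ i, ‖(diagonal d *ᵥ (WithLp.equiv 2 (Fin n → ℂ)) x) i‖ ^ 2
      ≤ s ^ 2 * ∑ i, ‖((WithLp.equiv 2 (Fin n → ℂ)) x) i‖ ^ 2 := by
    rw [Finset.mul_sum]
    refine Finset.sum_le_sum fun i _ => ?_
    rw [mulVec_diagonal, norm_mul, mul_pow]
    exact mul_le_mul_of_nonneg_right (pow_le_pow_left₀ (norm_nonneg _) (h i) 2)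
      (sq_nonneg _)
  refine le_of_pow_le_pow_left₀ (two_ne_zero) (mul_nonneg hs (norm_nonneg _)) ?_
  rw [mul_pow, h1, ← hx, h2]
  exact key

lemma opNorm_continuous {n : ℕ} : Continuous (opNorm (n := n)) := by
  let L : Mat n →ₗ[ℂ] (EuclideanSpace ℂ (Fin n) →L[ℂ] EuclideanSpace ℂ (Fin n)) :=
    { toFun := fun A => toEuclideanCLM (𝕜 := ℂ) (n := Fin n) A
      map_add' := fun A B => by simp
      map_smul' := fun c A => by simp }
  exact continuous_norm.comp L.continuous_of_finiteDimensional

/-! ### stdBasisMatrix sums -/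

lemma sum_C_eq_one {n : ℕ} (j : Fin n) :
    ∑ i, (Matrix.single j i (1:ℂ))ᴴ * (Matrix.single j i (1:ℂ)) = (1 : Mat n) := by
  ext a b
  simp [Matrix.sum_apply, Matrix.mul_apply, Matrix.single, Matrix.one_apply, ite_and,
    conjTranspose_apply, Finset.sum_ite_eq, Finset.sum_ite_eq', eq_comm]

lemma sum_CDC {n : ℕ} (D : Mat n) (j : Fin n) :
    ∑ i, (Matrix.single j i (1:ℂ))ᴴ * D * (Matrix.single j i (1:ℂ)) = D j j • (1 : Mat n) := by
  ext a b
  simp only [Matrix.sum_apply, Matrix.mul_apply, Matrix.single, Matrix.one_apply, ite_and,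
    conjTranspose_apply, Matrix.smul_apply, of_apply, apply_ite (starRingEnd ℂ), _root_.map_one,
    _root_.map_zero, ite_mul, one_mul, zero_mul, mul_ite, mul_one, mul_zero, smul_eq_mul]
  rw [Finset.sum_comm]
  by_cases hab : a = b
  · subst hab
    simp [Finset.sum_ite_eq, Finset.sum_ite_eq']
  · simp [Finset.sum_ite_eq, Finset.sum_ite_eq', hab, Ne.symm hab]

/-! ### diagonal unitaries -/

noncomputable def ee (x : ℝ) : ℂ := (x : ℂ) + (Real.sqrt (1 - x ^ 2) : ℝ) * Complex.I

lemma ee_conj_mul {x : ℝ} (hx : |x| ≤ 1) : (starRingEnd ℂ) (ee x) * ee x = 1 := by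
  have h1 : (Real.sqrt (1 - x ^ 2)) ^ 2 = 1 - x ^ 2 := Real.sq_sqrt (by nlinarith [abs_le.mp hx])
  have h2 : ((Real.sqrt (1 - x ^ 2) : ℝ) : ℂ) ^ 2 = 1 - (x : ℂ) ^ 2 := by
    rw [← Complex.ofReal_pow, h1]; push_cast; ring
  simp only [ee, map_add, Complex.conj_ofReal, _root_.map_mul, Complex.conj_I, mul_neg]
  have h3 : Complex.I ^ 2 = -1 := Complex.I_sq
  linear_combination (-(Complex.I ^ 2)) * h2 + (1 - (x:ℂ)^2) * h3 + (2*(x:ℂ)^2 - 2) * h3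

lemma ee_add_conj (x : ℝ) : ee x + (starRingEnd ℂ) (ee x) = 2 * (x : ℂ) := by
  simp only [ee, map_add, Complex.conj_ofReal, _root_.map_mul, Complex.conj_I, mul_neg]
  ring

noncomputable def dU {n : ℕ} (c : Fin n → ℝ) : Mat n := diagonal (fun i => ee (c i))

lemma dU_star_mul {n : ℕ} (c : Fin n → ℝ) (hc : ∀ i, |c i| ≤ 1) : (dU c)ᴴ * dU c = 1 := by
  ext i j
  rw [dU, diagonal_conjTranspose, diagonal_mul_diagonal, diagonal_apply, one_apply]
  split_ifs with h
  · subst h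
    exact ee_conj_mul (hc i)
  · rfl

lemma dU_mul_star {n : ℕ} (c : Fin n → ℝ) (hc : ∀ i, |c i| ≤ 1) : dU c * (dU c)ᴴ = 1 :=
  mul_eq_one_comm.mp (dU_star_mul c hc)

lemma diag_avg {n : ℕ} (c : Fin n → ℝ) :
    diagonal (fun i => (c i : ℂ)) = (1/2 : ℂ) • (dU c + (dU c)ᴴ) := by
  ext i j
  rw [dU, diagonal_conjTranspose, diagonal_add, Matrix.smul_apply, diagonal_apply, diagonal_apply]
  split_ifs with h
  · subst h
    simp only [Pi.add_apply, Pi.star_apply, RCLike.star_def, smul_eq_mul]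
    rw [ee_add_conj]
    ring
  · simp

/-! ### polar decomposition for invertible matrices -/

open scoped MatrixOrder in
lemma polar {n : ℕ} (A : Mat n) (hA : IsUnit A.det) :
    ∃ U P : Mat n, Uᴴ * U = 1 ∧ U * Uᴴ = 1 ∧ P.PosSemidef ∧ A = U * P := by
  set hps := Matrix.posSemidef_conjTranspose_mul_self A with hps_def
  set P := CFC.sqrt (Aᴴ * A) with hP_def
  have hP : P.PosSemidef := (CFC.sqrt_nonneg (Aᴴ * A)).posSemidef
  have hPP : P * P = Aᴴ * A := CFC.sqrt_mul_sqrt_self (Aᴴ * A) hps.nonneg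
  have hdet : IsUnit P.det := by
    have h1 : P.det * P.det = Aᴴ.det * A.det := by
      rw [← det_mul, hPP, det_mul]
    have h2 : IsUnit (P.det * P.det) := by
      rw [h1, det_conjTranspose]
      exact (hA.star).mul hA
    exact isUnit_of_mul_isUnit_left h2
  have hUU : (A * P⁻¹)ᴴ * (A * P⁻¹) = 1 := by
    have hh : (A * P⁻¹)ᴴ = P⁻¹ * Aᴴ := by
      rw [conjTranspose_mul, conjTranspose_nonsing_inv, hP.1.eq]
    rw [hh]
    calc P⁻¹ * Aᴴ * (A * P⁻¹) = P⁻¹ * (Aᴴ * A) * P⁻¹ := by simp only [Matrix.mul_assoc]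
      _ = P⁻¹ * (P * P) * P⁻¹ := by rw [hPP]
      _ = (P⁻¹ * P) * (P * P⁻¹) := by simp only [Matrix.mul_assoc]
      _ = 1 := by rw [nonsing_inv_mul _ hdet, mul_nonsing_inv _ hdet, one_mul]
  exact ⟨A * P⁻¹, P, hUU, mul_eq_one_comm.mp hUU, hP,
    (nonsing_inv_mul_cancel_right _ _ hdet).symm⟩

/-! ### norm lemmas -/

section NormLemmas

variable {n : ℕ} {N : Mat n → ℝ} (hN : IsMatrixNorm N)

include hN

lemma N_zero : N 0 = 0 := (hN.1 0).mpr rfl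

lemma N_neg (A : Mat n) : N (-A) = N A := by
  have := hN.2.1 (-1) A
  simpa using this

lemma N_nonneg (A : Mat n) : 0 ≤ N A := by
  have h := hN.2.2 A (-A)
  rw [add_neg_cancel, N_zero hN, N_neg hN] at h
  linarith

lemma N_sum_le {k : ℕ} (f : Fin k → Mat n) (s : Finset (Fin k)) :
    N (∑ i ∈ s, f i) ≤ ∑ i ∈ s, N (f i) := by
  classical
  induction s using Finset.induction_on with
  | empty => simp [N_zero hN]
  | @insert a s' h ih =>
    rw [Finset.sum_insert h, Finset.sum_insert h]
    exact le_trans (hN.2.2 _ _) (by linarith)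

lemma N_abs_sub (A B : Mat n) : |N A - N B| ≤ N (A - B) := by
  rw [abs_le]
  constructor
  · have h := hN.2.2 A (B - A)
    rw [add_sub_cancel] at h
    have h2 : N (B - A) = N (A - B) := by
      rw [← neg_sub A B, N_neg hN]
    linarith
  · have h := hN.2.2 B (A - B)
    rw [add_sub_cancel] at h
    linarith

lemma N_le_entrywise (A : Mat n) :
    N A ≤ ∑ i, ∑ j, ‖A i j‖ * N (Matrix.single i j 1) := by
  classical
  conv_lhs => rw [matrix_eq_sum_single A]
  have h1 : N (∑ i, ∑ j, Matrix.single i j (A i j))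
      ≤ ∑ i, N (∑ j, Matrix.single i j (A i j)) :=
    N_sum_le hN _ _
  refine h1.trans (Finset.sum_le_sum fun i _ => ?_)
  refine (N_sum_le hN _ _).trans (Finset.sum_le_sum fun j _ => ?_)
  have h2 : Matrix.single i j (A i j) = A i j • Matrix.single i j (1:ℂ) := by
    rw [smul_single, smul_eq_mul, mul_one]
  rw [h2, hN.2.1]

lemma N_continuous : Continuous N := by
  rw [continuous_iff_continuousAt]
  intro B
  have hg : Continuous (fun A : Mat n => ∑ i, ∑ j,
      ‖(A - B) i j‖ * N (Matrix.single i j 1)) := by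
    refine continuous_finset_sum _ fun i _ => continuous_finset_sum _ fun j _ => ?_
    refine Continuous.mul ?_ continuous_const
    have hc : Continuous fun A : Mat n => (A - B) i j :=
      (continuous_apply_apply i j).comp (continuous_id.sub continuous_const)
    exact continuous_norm.comp hc
  have hg0 : Filter.Tendsto (fun A : Mat n => ∑ i, ∑ j,
      ‖(A - B) i j‖ * N (Matrix.single i j 1)) (nhds B) (nhds 0) := by
    have := hg.tendsto B
    simpa using this
  rw [ContinuousAt, tendsto_iff_dist_tendsto_zero]
  refine squeeze_zero (fun _ => dist_nonneg) (fun A => ?_) hg0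
  rw [Real.dist_eq]
  exact (N_abs_sub hN A B).trans (N_le_entrywise hN (A - B))

end NormLemmas

/-! ### density of invertible matrices -/

lemma exists_invertible_seq {n : ℕ} (A : Mat n) :
    ∃ B : ℕ → Mat n, (∀ k, IsUnit (B k).det) ∧ Filter.Tendsto B Filter.atTop (nhds A) := by
  have hfin : (spectrum ℂ A).Finite := A.finite_spectrum
  have hfinR : {t : ℝ | (t : ℂ) ∈ spectrum ℂ A}.Finite := by
    have : {t : ℝ | (t : ℂ) ∈ spectrum ℂ A} = Complex.ofReal ⁻¹' (spectrum ℂ A) := rfl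
    rw [this]
    exact hfin.preimage (Complex.ofReal_injective.injOn)
  have hsel : ∀ k : ℕ, ∃ t : ℝ, t ∈ Set.Ioo 0 (1/(k+1 : ℝ)) ∧ (t : ℂ) ∉ spectrum ℂ A := by
    intro k
    have hio : (Set.Ioo (0:ℝ) (1/(k+1 : ℝ))).Infinite := Set.Ioo_infinite (by positivity)
    obtain ⟨t, ht⟩ := (hio.diff hfinR).nonempty
    exact ⟨t, ht.1, ht.2⟩
  choose t ht hts using hsel
  refine ⟨fun k => A - (t k : ℂ) • 1, fun k => ?_, ?_⟩
  · have h1 : IsUnit (algebraMap ℂ (Mat n) (t k : ℂ) - A) := spectrum.notMem_iff.mp (hts k)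
    have h2 : IsUnit (A - (t k : ℂ) • 1) := by
      have := h1.neg
      rwa [neg_sub, Algebra.algebraMap_eq_smul_one] at this
    exact (Matrix.isUnit_iff_isUnit_det _).mp h2
  · have htt : Filter.Tendsto (fun k => (t k : ℂ)) Filter.atTop (nhds 0) := by
      have h0 : Filter.Tendsto t Filter.atTop (nhds 0) := by
        refine squeeze_zero (fun k => (ht k).1.le) (fun k => (ht k).2.le) ?_
        exact tendsto_one_div_add_atTop_nhds_zero_nat
      have := (Complex.continuous_ofReal.tendsto 0).comp h0
      rw [Complex.ofReal_zero] at this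
      exact this
    have := Filter.Tendsto.sub (tendsto_const_nhds (x := A))
      (htt.smul_const (1 : Mat n))
    simpa using this

end MNormAux

namespace MNormAux

lemma core {n : ℕ} (hn : 0 < n) (N : Mat n → ℝ) (hN : IsMatrixNorm N) (hM : IsMNorm N)
    (hui : ∀ (A U V : Mat n), Uᴴ * U = 1 → U * Uᴴ = 1 → Vᴴ * V = 1 → V * Vᴴ = 1 →
      N (U * A * V) = N A) (A : Mat n) (hA : IsUnit A.det) : N A = N 1 * opNorm A := by
  haveI : Nonempty (Fin n) := ⟨⟨0, hn⟩⟩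
  obtain ⟨U, P, hU1, hU2, hP, hAUP⟩ := polar A hA
  have h1c : (1 : Mat n)ᴴ * 1 = 1 := by simp
  have h1c' : (1 : Mat n) * 1ᴴ = 1 := by simp
  have hNP : N A = N P := by
    have := hui P U 1 hU1 hU2 h1c h1c'
    rwa [Matrix.mul_one, ← hAUP] at this
  have hOP : opNorm A = opNorm P := by
    have := opNorm_unit_mul P hU1 hU2 h1c h1c'
    rwa [Matrix.mul_one, ← hAUP] at this
  have hH : P.IsHermitian := hP.1
  set d : Fin n → ℝ := hH.eigenvalues with hd_def
  set E : Mat n := (hH.eigenvectorUnitary : Mat n) with hE_def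
  set D : Mat n := diagonal (fun i => (d i : ℂ)) with hD_def
  have hE1 : Eᴴ * E = 1 := by
    have := Matrix.mem_unitaryGroup_iff'.mp hH.eigenvectorUnitary.2
    rwa [Matrix.star_eq_conjTranspose] at this
  have hE2 : E * Eᴴ = 1 := by
    have := Matrix.mem_unitaryGroup_iff.mp hH.eigenvectorUnitary.2
    rwa [Matrix.star_eq_conjTranspose] at this
  have hspec : P = E * D * Eᴴ := by
    have h := hH.spectral_theorem
    have hco : (RCLike.ofReal ∘ d : Fin n → ℂ) = fun i => (d i : ℂ) := rfl
    rw [hco] at h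
    exact h
  have hEh1 : (Eᴴ)ᴴ * Eᴴ = 1 := by rw [conjTranspose_conjTranspose]; exact hE2
  have hEh2 : Eᴴ * (Eᴴ)ᴴ = 1 := by rw [conjTranspose_conjTranspose]; exact hE1
  have hND : N P = N D := by rw [hspec]; exact hui D E Eᴴ hE1 hE2 hEh1 hEh2
  have hOD : opNorm P = opNorm D := by rw [hspec]; exact opNorm_unit_mul D hE1 hE2 hEh1 hEh2
  obtain ⟨j, -, hj⟩ := Finset.exists_max_image Finset.univ (fun i => |d i|)
    ⟨⟨0, hn⟩, Finset.mem_univ _⟩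
  have habs : ∀ i : Fin n, ‖((d i : ℝ) : ℂ)‖ = |d i| := fun i => by rw [Complex.norm_real, Real.norm_eq_abs]
  have hods : opNorm D = |d j| := by
    refine le_antisymm (opNorm_diag_upper _ _ (abs_nonneg _) fun i => ?_) ?_
    · rw [habs]; exact hj i (Finset.mem_univ i)
    · have := opNorm_diag_lower (fun i => ((d i : ℝ) : ℂ)) j
      rwa [habs] at this
  have hlow : |d j| * N 1 ≤ N D := by
    have hMj := hM n (fun i => Matrix.single j i 1) (fun _ => D) (sum_C_eq_one j)
    rw [sum_CDC D j] at hMj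
    have hsup : (⨆ _ : Fin n, N D) = N D := ciSup_const
    rw [hsup] at hMj
    have hDjj : D j j = (d j : ℂ) := diagonal_apply_eq _ j
    have : N (D j j • (1 : Mat n)) = |d j| * N 1 := by
      rw [hDjj, hN.2.1, habs]
    linarith
  have hup : N D ≤ |d j| * N 1 := by
    by_cases hz : |d j| = 0
    · have hD0 : D = 0 := by
        rw [hD_def]
        ext i k
        by_cases hik : i = k
        · subst hik
          have : |d i| ≤ 0 := hz ▸ hj i (Finset.mem_univ i)
          have : d i = 0 := abs_eq_zero.mp (le_antisymm this (abs_nonneg _))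
          simp [this]
        · simp [diagonal_apply_ne _ hik]
      rw [hD0, N_zero hN, hz]
      simp [mul_nonneg (abs_nonneg (d j)) (N_nonneg hN 1)]
    · have hpos : 0 < |d j| := lt_of_le_of_ne (abs_nonneg _) (Ne.symm hz)
      set c : Fin n → ℝ := fun i => d i / |d j| with hc_def
      have hc : ∀ i, |c i| ≤ 1 := by
        intro i
        rw [hc_def]
        rw [abs_div, abs_abs, div_le_one hpos]
        exact hj i (Finset.mem_univ i)
      have hDs : D = ((|d j| : ℝ) : ℂ) • diagonal (fun i => (c i : ℂ)) := by
        rw [hD_def, hc_def]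
        ext i k
        by_cases hik : i = k
        · subst hik
          simp only [diagonal_apply_eq, Matrix.smul_apply, smul_eq_mul]
          rw [← Complex.ofReal_mul]
          congr 1
          field_simp
        · simp [diagonal_apply_ne _ hik]
      have hdu1 : N (dU c) = N 1 := by
        have := hui 1 (dU c) 1 (dU_star_mul c hc) (dU_mul_star c hc) h1c h1c'
        rwa [Matrix.mul_one, Matrix.mul_one] at this
      have hdu2 : N ((dU c)ᴴ) = N 1 := by
        have hh1 : ((dU c)ᴴ)ᴴ * (dU c)ᴴ = 1 := by
          rw [conjTranspose_conjTranspose]; exact dU_mul_star c hc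
        have hh2 : (dU c)ᴴ * ((dU c)ᴴ)ᴴ = 1 := by
          rw [conjTranspose_conjTranspose]; exact dU_star_mul c hc
        have := hui 1 ((dU c)ᴴ) 1 hh1 hh2 h1c h1c'
        rwa [Matrix.mul_one, Matrix.mul_one] at this
      have hdc : N (diagonal (fun i => (c i : ℂ))) ≤ N 1 := by
        rw [diag_avg c, hN.2.1]
        have htri := hN.2.2 (dU c) ((dU c)ᴴ)
        rw [hdu1, hdu2] at htri
        have habs2 : ‖(1/2 : ℂ)‖ = 1/2 := by norm_num
        rw [habs2]
        linarith
      calc N D = ‖((|d j| : ℝ) : ℂ)‖ * N (diagonal (fun i => (c i : ℂ))) := by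
            rw [hDs, hN.2.1]
        _ = |d j| * N (diagonal (fun i => (c i : ℂ))) := by rw [Complex.norm_real, Real.norm_eq_abs, abs_abs]
        _ ≤ |d j| * N 1 := by
            exact mul_le_mul_of_nonneg_left hdc (abs_nonneg _)
  rw [hNP, hND, hOP, hOD, hods]
  linarith

end MNormAux


theorem unitarilyInvariant_MNorm_eq_opNorm {n : ℕ} (N : Mat n → ℝ)
    (hN : IsMatrixNorm N) (hM : IsMNorm N)
    (hui : ∀ (A U V : Mat n), Uᴴ * U = 1 → U * Uᴴ = 1 → Vᴴ * V = 1 → V * Vᴴ = 1 →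
      N (U * A * V) = N A) :
    ∃ α : ℝ, 0 < α ∧ ∀ A : Mat n, N A = α * opNorm A := by
  cases n with
  | zero =>
    refine ⟨1, one_pos, fun A => ?_⟩
    have hA : A = 0 := by ext i; exact i.elim0
    subst hA
    rw [(hN.1 0).mpr rfl]
    have h0 : opNorm (0 : Mat 0) = 0 := by
      rw [opNorm, _root_.map_zero, norm_zero]
    rw [h0, mul_zero]
  | succ m =>
    have hn : 0 < m + 1 := Nat.succ_pos m
    have hNpos : 0 < N 1 := by
      have h0 : (1 : Mat (m+1)) ≠ 0 := by
        intro h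
        have h1 := congrFun (congrFun h ⟨0, hn⟩) ⟨0, hn⟩
        rw [Matrix.one_apply_eq] at h1
        simp at h1
      have hne : N 1 ≠ 0 := fun h => h0 ((hN.1 1).mp h)
      exact lt_of_le_of_ne (MNormAux.N_nonneg hN 1) (Ne.symm hne)
    refine ⟨N 1, hNpos, fun A => ?_⟩
    obtain ⟨B, hBinv, hBlim⟩ := MNormAux.exists_invertible_seq A
    have hk : ∀ k, N (B k) = N 1 * opNorm (B k) := fun k =>
      MNormAux.core hn N hN hM hui (B k) (hBinv k)
    have t1 : Filter.Tendsto (fun k => N (B k)) Filter.atTop (nhds (N A)) :=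
      ((MNormAux.N_continuous hN).tendsto A).comp hBlim
    have t2 : Filter.Tendsto (fun k => N 1 * opNorm (B k)) Filter.atTop
        (nhds (N 1 * opNorm A)) :=
      ((continuous_const.mul MNormAux.opNorm_continuous).tendsto A).comp hBlim
    have t1' : Filter.Tendsto (fun k => N 1 * opNorm (B k)) Filter.atTop (nhds (N A)) := by
      have he : (fun k => N (B k)) = fun k => N 1 * opNorm (B k) := funext hk
      rwa [he] at t1
    exact tendsto_nhds_unique t1' t2
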